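/- arXiv:2201.11020 — 3 statements merged into one kernel-verified Lean document; each statement's English description precedes it below -/
import Mathlib

section
/- There exists a unique basic matrix resolvent R(ξ), i.e. a unique 2×2 matrix R(ξ) with entries in 𝒜[ε][[ξ⁻¹]] satisfying conditions (i)–(iv). -/
set_option synthInstance.maxHeartbeats 1000000
set_option maxHeartbeats 1000000

noncomputable section

open scoped BigOperators

/-- Index set of the generators `qᵢ, rᵢ` of 𝒜. -/
inductive NLSVar : Type
  | q : ℕ → NLSVar
  | r : ℕ → NLSVar

/-- 𝒜 = ℂ[q₀, r₀, q₁, r₁, …]. -/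
abbrev NLSA : Type := MvPolynomial NLSVar ℂ

/-- 𝒜[ε, ε⁻¹], as Laurent polynomials in ε over 𝒜. -/
abbrev NLSE : Type := LaurentPolynomial NLSA

instance : CommRing NLSE := inferInstance
instance : Algebra ℂ NLSE := inferInstance

/-- The generator qᵢ viewed in 𝒜[ε,ε⁻¹]. -/
def qv (i : ℕ) : NLSE := LaurentPolynomial.C (MvPolynomial.X (NLSVar.q i))

/-- The generator rᵢ viewed in 𝒜[ε,ε⁻¹]. -/
def rv (i : ℕ) : NLSE := LaurentPolynomial.C (MvPolynomial.X (NLSVar.r i))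

/-- ε ∈ 𝒜[ε,ε⁻¹]. -/
def eps : NLSE := LaurentPolynomial.T 1

/-- ε⁻¹ ∈ 𝒜[ε,ε⁻¹]. -/
def epsInv : NLSE := LaurentPolynomial.T (-1)

/-- Membership in the subring 𝒜[ε] ⊆ 𝒜[ε,ε⁻¹]: no negative powers of ε. -/
def inAE (x : NLSE) : Prop := ∀ n : ℤ, n < 0 → (show ℤ →₀ NLSA from AddMonoidAlgebra.coeff x) n = 0

/-- The Laurent-series ring 𝒜[ε,ε⁻¹][[ξ⁻¹]][ξ]; the Hahn-series exponent `n`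
records the power of ξ⁻¹. -/
abbrev NLSL : Type := LaurentSeries NLSE

instance : CommRing NLSL := inferInstance
instance : Algebra ℂ NLSL := inferInstance

/-- ξ as a Laurent series in ξ⁻¹. -/
def xiL : NLSL := HahnSeries.single (-1 : ℤ) 1

/-- Apply a zero-preserving map to all coefficients of a Laurent series. -/
def coeffMap {R S : Type*} [Zero R] [Zero S] (f : ZeroHom R S)
    (x : HahnSeries ℤ R) : HahnSeries ℤ S where
  coeff n := f (x.coeff n)
  isPWO_support' := x.isPWO_support'.mono (by
    intro n hn
    simp only [Function.mem_support, ne_eq] at hn ⊢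
    exact fun h => hn (by rw [h, map_zero]))

/-- The derivation ∂, applied coefficientwise to a Laurent series in ξ⁻¹. -/
def dmap (d : Derivation ℂ NLSE NLSE) : NLSL → NLSL :=
  coeffMap ⟨fun x => d x, map_zero d⟩

/-- `∂` is the (unique) derivation of 𝒜[ε,ε⁻¹] with ∂(qᵢ)=qᵢ₊₁, ∂(rᵢ)=rᵢ₊₁, ∂(ε)=0. -/
def IsDel (del : Derivation ℂ NLSE NLSE) : Prop :=
  (∀ i, del (qv i) = qv (i + 1)) ∧ (∀ i, del (rv i) = rv (i + 1)) ∧ del eps = 0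

/-- The constant embedding 𝒜[ε,ε⁻¹] → 𝒜[ε,ε⁻¹][[ξ⁻¹]][ξ]. -/
def CL (x : NLSE) : NLSL := HahnSeries.C x

/-- The matrix U(ξ) = [[−ξ, −q],[r, ξ]]. -/
def Umat : Matrix (Fin 2) (Fin 2) NLSL :=
  !![-xiL, -(CL (qv 0)); CL (rv 0), xiL]

/-- The matrix [[2+a, b],[c, −a]]. -/
def Rmat (a b c : NLSL) : Matrix (Fin 2) (Fin 2) NLSL := !![2 + a, b; c, -a]

/-- `a, b, c` are the entries of the (unique) basic matrix resolvent
R(ξ) = [[2+a(ξ), b(ξ)],[c(ξ), −a(ξ)]]. -/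
def IsMR (del : Derivation ℂ NLSE NLSE) (a b c : NLSL) : Prop :=
  (∀ n : ℤ, n ≤ 0 → a.coeff n = 0) ∧
  (∀ n : ℤ, n ≤ 0 → b.coeff n = 0) ∧
  (∀ n : ℤ, n ≤ 0 → c.coeff n = 0) ∧
  (∀ n : ℤ, inAE (a.coeff n)) ∧ (∀ n : ℤ, inAE (b.coeff n)) ∧ (∀ n : ℤ, inAE (c.coeff n)) ∧
  CL eps • (Rmat a b c).map (dmap del)
      + (Umat * Rmat a b c - Rmat a b c * Umat) = 0 ∧
  (Rmat a b c).det = 0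

/-- A_j, the ξ^{−j−1}-coefficient of a(ξ). -/
def coA (a : NLSL) (j : ℕ) : NLSE := a.coeff (j + 1 : ℤ)

/-- The NLS derivations D_j: derivations of 𝒜[ε,ε⁻¹] commuting with ∂, annihilating ε,
with D_j(q) = 2^{j+1} ε⁻¹ B_{j+1} and D_j(r) = 2^{j+1} ε⁻¹ C_{j+1}. -/
def IsNLSD (del : Derivation ℂ NLSE NLSE) (b c : NLSL)
    (D : ℕ → Derivation ℂ NLSE NLSE) : Prop :=
  (∀ j x, D j (del x) = del (D j x)) ∧
  (∀ j, D j eps = 0) ∧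
  (∀ j, D j (qv 0) = (2 : NLSE) ^ (j + 1) * epsInv * coA b (j + 1)) ∧
  (∀ j, D j (rv 0) = (2 : NLSE) ^ (j + 1) * epsInv * coA c (j + 1))

end

noncomputable section


namespace NLSAux

open PowerSeries

abbrev P : Type := PowerSeries NLSE

variable (del : Derivation ℂ NLSE NLSE)

/-- The coefficient recursion (Aₙ, Bₙ, Cₙ). -/
def tri : ℕ → NLSE × NLSE × NLSE
  | 0 => (0, 0, 0)
  | 1 => (0, qv 0, -rv 0)
  | n + 2 =>
    (-((1/2 : ℂ) • ∑ i ∈ (Finset.range (n+1)).attach,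
        ((tri (i.1+1)).1 * (tri (n+1-i.1)).1 +
         (tri (i.1+1)).2.1 * (tri (n+1-i.1)).2.2)),
     (1/2 : ℂ) • (eps * del (tri (n+1)).2.1) + qv 0 * (tri (n+1)).1,
     -((1/2 : ℂ) • (eps * del (tri (n+1)).2.2)) - rv 0 * (tri (n+1)).1)
  termination_by n => n
  decreasing_by
  all_goals first
    | omega
    | (have := i.2; simp only [Finset.mem_range] at this; omega)

def A (n : ℕ) : NLSE := (tri del n).1
def B (n : ℕ) : NLSE := (tri del n).2.1
def C (n : ℕ) : NLSE := (tri del n).2.2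

lemma A_zero : A del 0 = 0 := by simp [A, tri]
lemma B_zero : B del 0 = 0 := by simp [B, tri]
lemma C_zero : C del 0 = 0 := by simp [C, tri]
lemma A_one : A del 1 = 0 := by simp [A, tri]
lemma B_one : B del 1 = qv 0 := by simp [B, tri]
lemma C_one : C del 1 = -rv 0 := by simp [C, tri]

lemma A_succ2 (n : ℕ) : A del (n+2) =
    -((1/2 : ℂ) • ∑ i ∈ Finset.range (n+1),
        (A del (i+1) * A del (n+1-i) + B del (i+1) * C del (n+1-i))) := by
  rw [← Finset.sum_attach (Finset.range (n+1))
    (fun i => A del (i+1) * A del (n+1-i) + B del (i+1) * C del (n+1-i))]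
  simp only [A, B, C, tri]

lemma B_succ2 (n : ℕ) : B del (n+2) =
    (1/2 : ℂ) • (eps * del (B del (n+1))) + qv 0 * A del (n+1) := by
  simp only [B, A, tri]

lemma C_succ2 (n : ℕ) : C del (n+2) =
    -((1/2 : ℂ) • (eps * del (C del (n+1)))) - rv 0 * A del (n+1) := by
  simp only [C, A, tri]


instance : IsDomain NLSE := NoZeroDivisors.to_isDomain _
instance instDomP : IsDomain P := inferInstance
instance instDomL : IsDomain NLSL := inferInstance

lemma two_mul_eq_smul (x : NLSE) : (2 : NLSE) * x = (2 : ℂ) • x := by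
  rw [Algebra.smul_def, map_ofNat]

lemma two_mul_half (x : NLSE) : (2 : NLSE) * ((1/2 : ℂ) • x) = x := by
  rw [Algebra.mul_smul_comm, two_mul_eq_smul, smul_smul]
  norm_num

lemma two_ne : (2 : NLSE) ≠ 0 := by
  rw [show (2 : NLSE) = (2 : ℂ) • (1 : NLSE) by rw [← two_mul_eq_smul, mul_one]]
  exact smul_ne_zero two_ne_zero one_ne_zero

lemma inAE_single (m : ℤ) (hm : 0 ≤ m) (p : NLSA) : inAE (AddMonoidAlgebra.single m p) := by
  intro n hn
  show (AddMonoidAlgebra.single m p).coeff n = 0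
  rw [AddMonoidAlgebra.coeff_single, Finsupp.single_apply_eq_zero]
  intro h; omega

lemma inAE_C (p : NLSA) : inAE (LaurentPolynomial.C p) := by
  have : (LaurentPolynomial.C p : NLSE) = AddMonoidAlgebra.single 0 p := by
    rw [← LaurentPolynomial.single_eq_C]
  rw [this]
  exact inAE_single 0 le_rfl p

/-- 𝒜[ε] as a subalgebra. -/
def SA : Subalgebra ℂ NLSE where
  carrier := {x | inAE x}
  add_mem' := by
    intro x y hx hy n hn
    show (x + y).coeff n = 0
    rw [AddMonoidAlgebra.coeff_add, Finsupp.add_apply]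
    have hx' : x.coeff n = 0 := hx n hn
    have hy' : y.coeff n = 0 := hy n hn
    rw [hx', hy', add_zero]
  mul_mem' := by
    intro x y hx hy n hn
    show (x * y).coeff n = 0
    by_contra h
    have hmem : n ∈ (x * y : NLSE).coeff.support := Finsupp.mem_support_iff.mpr h
    have := AddMonoidAlgebra.support_coeff_mul_subset x y hmem
    rw [Finset.mem_add] at this
    obtain ⟨i, hi, j, hj, rfl⟩ := this
    have hxi : ¬ i < 0 := fun hlt => Finsupp.mem_support_iff.mp hi (hx i hlt)
    have hyj : ¬ j < 0 := fun hlt => Finsupp.mem_support_iff.mp hj (hy j hlt)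
    omega
  algebraMap_mem' := by
    intro c n hn
    have h0 : algebraMap ℂ NLSE c = AddMonoidAlgebra.single (0:ℤ) (algebraMap ℂ NLSA c) := by
      rw [AddMonoidAlgebra.coe_algebraMap, Function.comp_apply]
    show (algebraMap ℂ NLSE c).coeff n = 0
    rw [h0, AddMonoidAlgebra.coeff_single, Finsupp.single_apply_eq_zero]
    intro h; omega

def gens : Set NLSE := {eps} ∪ (Set.range qv ∪ Set.range rv)

/-- The subalgebra generated by `ε, qᵢ, rᵢ`. -/
def G : Subalgebra ℂ NLSE := Algebra.adjoin ℂ gens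

lemma eps_mem_G : eps ∈ G := Algebra.subset_adjoin (Or.inl rfl)
lemma qv_mem_G (i : ℕ) : qv i ∈ G := Algebra.subset_adjoin (Or.inr (Or.inl ⟨i, rfl⟩))
lemma rv_mem_G (i : ℕ) : rv i ∈ G := Algebra.subset_adjoin (Or.inr (Or.inr ⟨i, rfl⟩))

lemma del_mem_G (hdel : IsDel del) {x : NLSE} (hx : x ∈ G) : del x ∈ G := by
  induction hx using Algebra.adjoin_induction with
  | mem y hy =>
    rcases hy with h | h | h
    · rw [Set.mem_singleton_iff] at h; subst h
      rw [hdel.2.2]; exact zero_mem G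
    · obtain ⟨i, rfl⟩ := h; rw [hdel.1 i]; exact qv_mem_G _
    · obtain ⟨i, rfl⟩ := h; rw [hdel.2.1 i]; exact rv_mem_G _
  | algebraMap c => rw [Derivation.map_algebraMap]; exact zero_mem G
  | add y z hy hz ihy ihz => rw [map_add]; exact add_mem ihy ihz
  | mul y z hy hz ihy ihz =>
    rw [Derivation.leibniz, smul_eq_mul, smul_eq_mul]
    exact add_mem (mul_mem hy ihz) (mul_mem hz ihy)

lemma inAE_of_mem_G {x : NLSE} (hx : x ∈ G) : inAE x := by
  have : G ≤ SA := Algebra.adjoin_le (by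
    rintro y (h | h | h)
    · rw [Set.mem_singleton_iff] at h; subst h
      exact inAE_single 1 (by norm_num) 1
    · obtain ⟨i, rfl⟩ := h; exact inAE_C _
    · obtain ⟨i, rfl⟩ := h; exact inAE_C _)
  exact this hx

lemma tri_mem_G (hdel : IsDel del) : ∀ n, A del n ∈ G ∧ B del n ∈ G ∧ C del n ∈ G := by
  intro n
  induction n using Nat.strong_induction_on with
  | _ n ih =>
    match n with
    | 0 => exact ⟨by rw [A_zero]; exact zero_mem G, by rw [B_zero]; exact zero_mem G,
        by rw [C_zero]; exact zero_mem G⟩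
    | 1 => exact ⟨by rw [A_one]; exact zero_mem G, by rw [B_one]; exact qv_mem_G 0,
        by rw [C_one]; exact neg_mem (rv_mem_G 0)⟩
    | (m+2) =>
      have ih1 := ih (m+1) (by omega)
      refine ⟨?_, ?_, ?_⟩
      · rw [A_succ2]
        refine neg_mem (Subalgebra.smul_mem G (Subalgebra.sum_mem G ?_) _)
        intro i hi
        rw [Finset.mem_range] at hi
        have h1 := ih (i+1) (by omega)
        have h2 := ih (m+1-i) (by omega)
        exact add_mem (mul_mem h1.1 h2.1) (mul_mem h1.2.1 h2.2.2)
      · rw [B_succ2]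
        exact add_mem (Subalgebra.smul_mem G
          (mul_mem eps_mem_G (del_mem_G del hdel ih1.2.1)) _)
          (mul_mem (qv_mem_G 0) ih1.1)
      · rw [C_succ2]
        exact sub_mem (neg_mem (Subalgebra.smul_mem G
          (mul_mem eps_mem_G (del_mem_G del hdel ih1.2.2)) _))
          (mul_mem (rv_mem_G 0) ih1.1)


/-! ### Power series level -/

def psD (f : P) : P := PowerSeries.mk fun n => del (PowerSeries.coeff n f)

lemma coeff_psD (f : P) (n : ℕ) :
    PowerSeries.coeff n (psD del f) = del (PowerSeries.coeff n f) :=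
  PowerSeries.coeff_mk _ _

lemma psD_zero : psD del 0 = 0 := by
  ext n; simp [coeff_psD]

lemma psD_add (f g : P) : psD del (f + g) = psD del f + psD del g := by
  ext n; simp [coeff_psD]

lemma psD_mul (f g : P) : psD del (f * g) = psD del f * g + f * psD del g := by
  ext n : 1
  simp only [coeff_psD, map_add, PowerSeries.coeff_mul, map_sum, Derivation.leibniz,
    smul_eq_mul]
  rw [← Finset.sum_add_distrib]
  apply Finset.sum_congr rfl
  intro p hp
  ring

lemma psD_C (x : NLSE) : psD del (PowerSeries.C x) = PowerSeries.C (del x) := by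
  ext n
  rw [coeff_psD, PowerSeries.coeff_C, PowerSeries.coeff_C]
  split_ifs <;> simp

lemma del_two : del (2 : NLSE) = 0 := by
  rw [show (2 : NLSE) = algebraMap ℂ NLSE 2 from (map_ofNat _ 2).symm,
    Derivation.map_algebraMap]

lemma psD_two : psD del (2 : P) = 0 := by
  rw [show (2 : P) = PowerSeries.C 2 from (map_ofNat _ 2).symm, psD_C, del_two,
    map_zero]

def pa : P := PowerSeries.mk (A del)
def pb : P := PowerSeries.mk (B del)
def pc : P := PowerSeries.mk (C del)
def pbs : P := PowerSeries.mk fun n => B del (n+1)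
def pcs : P := PowerSeries.mk fun n => C del (n+1)

lemma X_shift (f : P) (h : PowerSeries.coeff 0 f = 0) :
    f = PowerSeries.X * PowerSeries.mk (fun k => PowerSeries.coeff (k+1) f) := by
  ext n
  cases n with
  | zero =>
    rw [h, PowerSeries.coeff_zero_eq_constantCoeff, map_mul, PowerSeries.constantCoeff_X,
      zero_mul]
  | succ k => rw [PowerSeries.coeff_succ_X_mul, PowerSeries.coeff_mk]

lemma hXb : pb del = PowerSeries.X * pbs del := by
  have h := X_shift (pb del) (by simp [pb, B_zero])
  rw [h]
  congr 1
  ext k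
  simp [pb, pbs]

lemma hXc : pc del = PowerSeries.X * pcs del := by
  have h := X_shift (pc del) (by simp [pc, C_zero])
  rw [h]
  congr 1
  ext k
  simp [pc, pcs]

/-- Coefficient form of the right side of the `b` equation. -/
lemma coeff_formB (fa fbs : P) (x : NLSE) (n : ℕ) :
    PowerSeries.coeff n (2 * fbs - 2 * PowerSeries.C x * fa
      - 2 * PowerSeries.C x) =
    2 * PowerSeries.coeff n fbs - 2 * x * PowerSeries.coeff n fa
      - (if n = 0 then 2 * x else 0) := by
  rw [show (2 : P) = PowerSeries.C 2 from (map_ofNat _ 2).symm]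
  rw [map_sub, map_sub, ← map_mul, PowerSeries.coeff_C_mul,
    PowerSeries.coeff_C_mul, PowerSeries.coeff_C]

lemma bEq_iff (fa fb fbs : P) :
    (PowerSeries.C eps * psD del fb
        = 2 * fbs - 2 * PowerSeries.C (qv 0) * fa - 2 * PowerSeries.C (qv 0)) ↔
    (∀ n : ℕ, eps * del (PowerSeries.coeff n fb)
        = 2 * PowerSeries.coeff n fbs - 2 * qv 0 * PowerSeries.coeff n fa
          - (if n = 0 then 2 * qv 0 else 0)) := by
  rw [PowerSeries.ext_iff]
  apply forall_congr'
  intro n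
  rw [PowerSeries.coeff_C_mul, coeff_psD, coeff_formB]

lemma coeff_formC (fa fcs : P) (x : NLSE) (n : ℕ) :
    PowerSeries.coeff n (-(2 * fcs) - 2 * PowerSeries.C x * fa
      - 2 * PowerSeries.C x) =
    -(2 * PowerSeries.coeff n fcs) - 2 * x * PowerSeries.coeff n fa
      - (if n = 0 then 2 * x else 0) := by
  rw [show (2 : P) = PowerSeries.C 2 from (map_ofNat _ 2).symm]
  rw [map_sub, map_sub, map_neg, ← map_mul, PowerSeries.coeff_C_mul,
    PowerSeries.coeff_C_mul, PowerSeries.coeff_C]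

lemma cEq_iff (fa fc fcs : P) :
    (PowerSeries.C eps * psD del fc
        = -(2 * fcs) - 2 * PowerSeries.C (rv 0) * fa - 2 * PowerSeries.C (rv 0)) ↔
    (∀ n : ℕ, eps * del (PowerSeries.coeff n fc)
        = -(2 * PowerSeries.coeff n fcs) - 2 * rv 0 * PowerSeries.coeff n fa
          - (if n = 0 then 2 * rv 0 else 0)) := by
  rw [PowerSeries.ext_iff]
  apply forall_congr'
  intro n
  rw [PowerSeries.coeff_C_mul, coeff_psD, coeff_formC]

lemma detEq_iff (fa fb fc : P) :
    (fa * fa + 2 * fa + fb * fc = 0) ↔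
    (∀ n : ℕ, (∑ p ∈ Finset.HasAntidiagonal.antidiagonal n,
        PowerSeries.coeff p.1 fa * PowerSeries.coeff p.2 fa)
      + 2 * PowerSeries.coeff n fa
      + (∑ p ∈ Finset.HasAntidiagonal.antidiagonal n,
        PowerSeries.coeff p.1 fb * PowerSeries.coeff p.2 fc) = 0) := by
  rw [PowerSeries.ext_iff]
  apply forall_congr'
  intro n
  rw [map_add, map_add, map_zero,
    show (2 : P) = PowerSeries.C 2 from (map_ofNat _ 2).symm,
    PowerSeries.coeff_C_mul, PowerSeries.coeff_mul, PowerSeries.coeff_mul]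

lemma hbPS : PowerSeries.C eps * psD del (pb del)
    = 2 * pbs del - 2 * PowerSeries.C (qv 0) * pa del
      - 2 * PowerSeries.C (qv 0) := by
  rw [bEq_iff]
  intro n
  match n with
  | 0 =>
    simp only [pa, pb, pbs, PowerSeries.coeff_mk, if_pos rfl, A_zero, B_zero]
    simp [B_one]
  | (m+1) =>
    simp only [pa, pb, pbs, PowerSeries.coeff_mk, Nat.succ_ne_zero, if_false]
    rw [B_succ2, mul_add, two_mul_half]
    ring

lemma hcPS : PowerSeries.C eps * psD del (pc del)
    = -(2 * pcs del) - 2 * PowerSeries.C (rv 0) * pa del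
      - 2 * PowerSeries.C (rv 0) := by
  rw [cEq_iff]
  intro n
  match n with
  | 0 =>
    simp only [pa, pc, pcs, PowerSeries.coeff_mk, if_pos rfl, A_zero, C_zero]
    simp [C_one]
  | (m+1) =>
    simp only [pa, pc, pcs, PowerSeries.coeff_mk, Nat.succ_ne_zero, if_false]
    rw [C_succ2, mul_sub, mul_neg, two_mul_half]
    ring

lemma antidiag_inner (m : ℕ) (f : ℕ → ℕ → NLSE) (h1 : ∀ j, f 0 j = 0)
    (h2 : ∀ i, f i 0 = 0) :
    ∑ p ∈ Finset.HasAntidiagonal.antidiagonal (m+2), f p.1 p.2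
      = ∑ i ∈ Finset.range (m+1), f (i+1) (m+1-i) := by
  rw [Finset.Nat.sum_antidiagonal_eq_sum_range_succ_mk]
  simp only [Nat.succ_eq_add_one]
  rw [Finset.sum_range_succ, Finset.sum_range_succ']
  simp [h1, h2, Nat.succ_sub_succ_eq_sub]

lemma hdetPS : pa del * pa del + 2 * pa del + pb del * pc del = 0 := by
  rw [detEq_iff]
  intro n
  match n with
  | 0 =>
    simp [pa, pb, pc, A_zero, B_zero, C_zero]
  | 1 =>
    simp [pa, pb, pc, Finset.Nat.sum_antidiagonal_eq_sum_range_succ_mk,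
      Finset.sum_range_succ, A_zero, A_one, B_zero, C_zero]
  | (m+2) =>
    simp only [pa, pb, pc, PowerSeries.coeff_mk]
    rw [antidiag_inner m (fun i j => A del i * A del j)
        (fun j => by simp [A_zero]) (fun i => by simp [A_zero]),
      antidiag_inner m (fun i j => B del i * C del j)
        (fun j => by simp [B_zero]) (fun i => by simp [C_zero]),
      A_succ2 del m, mul_neg, two_mul_half, Finset.sum_add_distrib]
    ring


lemma two_one_pa_ne : (2 : P) * (1 + pa del) ≠ 0 := by
  intro h
  have h0 := congrArg (PowerSeries.constantCoeff) h
  rw [map_mul, map_add, map_one, map_ofNat, map_zero, pa, PowerSeries.constantCoeff_mk,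
    A_zero, add_zero, mul_one] at h0
  exact two_ne h0

lemma haPS : PowerSeries.C eps * psD del (pa del)
    = PowerSeries.C (qv 0) * pc del + PowerSeries.C (rv 0) * pb del := by
  have hb := hbPS del
  have hc := hcPS del
  have hd := hdetPS del
  have hd1 : psD del (pa del) * pa del + pa del * psD del (pa del)
      + 2 * psD del (pa del)
      + (psD del (pb del) * pc del + pb del * psD del (pc del)) = 0 := by
    have e1 : psD del (pa del * pa del + 2 * pa del + pb del * pc del)
        = psD del (pa del) * pa del + pa del * psD del (pa del)
          + 2 * psD del (pa del)
          + (psD del (pb del) * pc del + pb del * psD del (pc del)) := by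
      rw [psD_add, psD_add, psD_mul, psD_mul, psD_mul, psD_two]
      ring
    rw [← e1, hd, psD_zero]
  have key : (2 : P) * (1 + pa del)
      * (PowerSeries.C eps * psD del (pa del)
        - (PowerSeries.C (qv 0) * pc del + PowerSeries.C (rv 0) * pb del))
      = 0 := by
    linear_combination (PowerSeries.C eps) * hd1 - pc del * hb - pb del * hc
      + (2 * pcs del) * hXb del - (2 * pbs del) * hXc del
  rcases mul_eq_zero.mp key with h | h
  · exact absurd h (two_one_pa_ne del)
  · exact sub_eq_zero.mp h

/-! ### Transfer to Laurent series -/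

def ofP : P →+* NLSL := HahnSeries.ofPowerSeries ℤ NLSE

lemma ofP_coeff_neg (f : P) {n : ℤ} (hn : n < 0) : (ofP f).coeff n = 0 := by
  rw [ofP, HahnSeries.ofPowerSeries_apply]
  apply HahnSeries.embDomain_notin_range
  rintro ⟨m, hm⟩
  have hm' : (m : ℤ) = n := hm
  omega

lemma ofP_coeff_toNat (f : P) {n : ℤ} (hn : 0 ≤ n) :
    (ofP f).coeff n = PowerSeries.coeff n.toNat f := by
  obtain ⟨m, rfl⟩ := Int.eq_ofNat_of_zero_le hn
  rw [ofP, HahnSeries.ofPowerSeries_apply_coeff]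
  simp

lemma eq_ofP {z : NLSL} (hz : ∀ n : ℤ, n < 0 → z.coeff n = 0) :
    z = ofP (PowerSeries.mk fun k => z.coeff (k : ℤ)) := by
  apply HahnSeries.ext
  funext n
  rcases lt_or_ge n 0 with h | h
  · rw [hz n h, ofP_coeff_neg _ h]
  · rw [ofP_coeff_toNat _ h, PowerSeries.coeff_mk]
    congr 1
    omega

lemma coeff_dmap (x : NLSL) (n : ℤ) : (dmap del x).coeff n = del (x.coeff n) := rfl

lemma dmap_ofP (f : P) : dmap del (ofP f) = ofP (psD del f) := by
  apply HahnSeries.ext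
  funext n
  rw [coeff_dmap]
  rcases lt_or_ge n 0 with h | h
  · rw [ofP_coeff_neg _ h, ofP_coeff_neg _ h, map_zero]
  · rw [ofP_coeff_toNat _ h, ofP_coeff_toNat _ h, coeff_psD]

lemma ofP_C (x : NLSE) : ofP (PowerSeries.C x) = CL x := by
  rw [ofP, HahnSeries.ofPowerSeries_C]
  rfl

lemma xiL_mul_ofP (f : P) : xiL * ofP (PowerSeries.X * f) = ofP f := by
  rw [map_mul, ofP, HahnSeries.ofPowerSeries_X, ← mul_assoc, xiL,
    HahnSeries.single_mul_single]
  norm_num [HahnSeries.single_zero_one]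

def aL : NLSL := ofP (pa del)
def bL : NLSL := ofP (pb del)
def cL : NLSL := ofP (pc del)

lemma E11 : CL eps * dmap del (aL del) = CL (qv 0) * cL del + CL (rv 0) * bL del := by
  have h := congrArg ofP (haPS del)
  simp only [map_add, map_mul, ofP_C, ← dmap_ofP] at h
  exact h

lemma xiL_bL : xiL * bL del = ofP (pbs del) := by
  rw [bL]
  conv_lhs => rw [hXb del]
  rw [xiL_mul_ofP]

lemma xiL_cL : xiL * cL del = ofP (pcs del) := by
  rw [cL]
  conv_lhs => rw [hXc del]
  rw [xiL_mul_ofP]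

lemma E12 : CL eps * dmap del (bL del)
    = 2 * (xiL * bL del) - 2 * CL (qv 0) * aL del - 2 * CL (qv 0) := by
  have h := congrArg ofP (hbPS del)
  simp only [map_sub, map_mul, map_ofNat, ofP_C, ← dmap_ofP] at h
  rw [xiL_bL, bL, aL]
  exact h

lemma E21 : CL eps * dmap del (cL del)
    = -(2 * (xiL * cL del)) - 2 * CL (rv 0) * aL del - 2 * CL (rv 0) := by
  have h := congrArg ofP (hcPS del)
  simp only [map_sub, map_neg, map_mul, map_ofNat, ofP_C, ← dmap_ofP] at h
  rw [xiL_cL, cL, aL]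
  exact h

lemma detL : aL del * aL del + 2 * aL del + bL del * cL del = 0 := by
  have h := congrArg ofP (hdetPS del)
  simp only [map_add, map_mul, map_ofNat, map_zero] at h
  exact h


lemma psD_neg (f : P) : psD del (-f) = -psD del f := by
  ext n : 1
  simp [coeff_psD]

lemma entry00_ofP : (2 : NLSL) + aL del = ofP (2 + pa del) := by
  rw [map_add, map_ofNat, aL]

lemma entryneg_ofP : -aL del = ofP (-pa del) := by rw [map_neg, aL]

lemma dmap_2aL : dmap del (2 + aL del) = dmap del (aL del) := by
  rw [entry00_ofP, dmap_ofP, psD_add, psD_two, zero_add, aL, dmap_ofP]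

lemma dmap_negaL : dmap del (-aL del) = -dmap del (aL del) := by
  rw [entryneg_ofP, dmap_ofP, psD_neg, aL, dmap_ofP, map_neg]

lemma inAE_zero : inAE (0 : NLSE) := fun n _ => rfl

lemma two_mem_G : (2 : NLSE) ∈ G := by
  rw [show (2 : NLSE) = algebraMap ℂ NLSE 2 from (map_ofNat _ 2).symm]
  exact Subalgebra.algebraMap_mem G 2

lemma inAE_coeff_aux {f : P} (hf : ∀ k : ℕ, PowerSeries.coeff k f ∈ G) (n : ℤ) :
    inAE ((ofP f).coeff n) := by
  rcases lt_or_ge n 0 with h | h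
  · rw [ofP_coeff_neg _ h]; exact inAE_zero
  · rw [ofP_coeff_toNat _ h]; exact inAE_of_mem_G (hf _)

lemma coeff_nonpos_zero {f : P} (hf : PowerSeries.coeff 0 f = 0) {n : ℤ} (hn : n ≤ 0) :
    (ofP f).coeff n = 0 := by
  rcases lt_or_eq_of_le hn with h | h
  · exact ofP_coeff_neg _ h
  · subst h
    rw [ofP_coeff_toNat _ le_rfl]
    simpa using hf

lemma pa_mem_G (hdel : IsDel del) (k : ℕ) : PowerSeries.coeff k (pa del) ∈ G := by
  rw [pa, PowerSeries.coeff_mk]; exact (tri_mem_G del hdel k).1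

lemma pb_mem_G (hdel : IsDel del) (k : ℕ) : PowerSeries.coeff k (pb del) ∈ G := by
  rw [pb, PowerSeries.coeff_mk]; exact (tri_mem_G del hdel k).2.1

lemma pc_mem_G (hdel : IsDel del) (k : ℕ) : PowerSeries.coeff k (pc del) ∈ G := by
  rw [pc, PowerSeries.coeff_mk]; exact (tri_mem_G del hdel k).2.2

lemma pa_coeff_zero : PowerSeries.coeff 0 (pa del) = 0 := by
  rw [pa, PowerSeries.coeff_mk, A_zero]

lemma pb_coeff_zero : PowerSeries.coeff 0 (pb del) = 0 := by
  rw [pb, PowerSeries.coeff_mk, B_zero]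

lemma pc_coeff_zero : PowerSeries.coeff 0 (pc del) = 0 := by
  rw [pc, PowerSeries.coeff_mk, C_zero]

end NLSAux

/-- Lemma 1.1: existence and uniqueness of the basic matrix resolvent. -/
theorem nls_basic_matrix_resolvent_exists_unique
    (del : Derivation ℂ NLSE NLSE) (hdel : IsDel del) :
    ∃! R : Matrix (Fin 2) (Fin 2) NLSL,
      -- entries of R lie in 𝒜[ε][[ξ⁻¹]]
      (∀ i j : Fin 2, ∀ n : ℤ, n < 0 → (R i j).coeff n = 0) ∧
      (∀ i j : Fin 2, ∀ n : ℤ, inAE ((R i j).coeff n)) ∧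
      -- (i): R − diag(2,0) has entries in ξ⁻¹·𝒜[ε][[ξ⁻¹]]
      (∀ i j : Fin 2, ∀ n : ℤ, n ≤ 0 →
        ((R - !![(2 : NLSL), 0; 0, 0]) i j).coeff n = 0) ∧
      -- (ii): ε∂(R(ξ)) + [U(ξ), R(ξ)] = 0
      (CL eps • R.map (dmap del) + (Umat * R - R * Umat) = 0) ∧
      -- (iii): tr R(ξ) = 2
      (R.trace = 2) ∧
      -- (iv): det R(ξ) = 0
      (R.det = 0) := by
  classical
  open NLSAux in
  refine ⟨!![2 + aL del, bL del; cL del, -aL del], ⟨?_, ?_, ?_, ?_, ?_, ?_⟩, ?_⟩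
  · -- negative coefficients vanish
    intro i j n hn
    fin_cases i <;> fin_cases j <;>
      simp only [Fin.mk_zero, Fin.mk_one, Fin.isValue, Matrix.of_apply, Matrix.cons_val', Matrix.cons_val_zero,
        Matrix.cons_val_one, Matrix.head_cons, Matrix.empty_val', Matrix.cons_val_fin_one,
        Matrix.head_fin_const]
    · rw [entry00_ofP]; exact ofP_coeff_neg _ hn
    · exact ofP_coeff_neg _ hn
    · exact ofP_coeff_neg _ hn
    · rw [entryneg_ofP]; exact ofP_coeff_neg _ hn
  · -- inAE
    intro i j n
    fin_cases i <;> fin_cases j <;>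
      simp only [Fin.mk_zero, Fin.mk_one, Fin.isValue, Matrix.of_apply, Matrix.cons_val', Matrix.cons_val_zero,
        Matrix.cons_val_one, Matrix.head_cons, Matrix.empty_val', Matrix.cons_val_fin_one,
        Matrix.head_fin_const]
    · rw [entry00_ofP]
      refine inAE_coeff_aux (fun k => ?_) n
      rw [map_add]
      exact add_mem (by
        rw [show ((2:P)) = PowerSeries.C 2 from (map_ofNat _ 2).symm,
          PowerSeries.coeff_C]
        split_ifs
        · exact two_mem_G
        · exact zero_mem G) (pa_mem_G del hdel k)
    · exact inAE_coeff_aux (fun k => pb_mem_G del hdel k) n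
    · exact inAE_coeff_aux (fun k => pc_mem_G del hdel k) n
    · rw [entryneg_ofP]
      refine inAE_coeff_aux (fun k => ?_) n
      rw [map_neg]
      exact neg_mem (pa_mem_G del hdel k)
  · -- condition (i)
    intro i j n hn
    fin_cases i <;> fin_cases j <;>
      simp only [Fin.mk_zero, Fin.mk_one, Fin.isValue, Matrix.of_apply, Matrix.sub_apply, Matrix.cons_val',
        Matrix.cons_val_zero, Matrix.cons_val_one, Matrix.head_cons, Matrix.empty_val',
        Matrix.cons_val_fin_one, Matrix.head_fin_const]
    · rw [show (2 : NLSL) + aL del - 2 = aL del by ring, aL]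
      exact coeff_nonpos_zero (pa_coeff_zero del) hn
    · rw [sub_zero, bL]
      exact coeff_nonpos_zero (pb_coeff_zero del) hn
    · rw [sub_zero, cL]
      exact coeff_nonpos_zero (pc_coeff_zero del) hn
    · rw [sub_zero, entryneg_ofP]
      exact coeff_nonpos_zero (by rw [map_neg, pa_coeff_zero, neg_zero]) hn
  · -- condition (ii)
    rw [← Matrix.ext_iff]
    intro i j
    fin_cases i <;> fin_cases j <;>
      simp only [Fin.mk_zero, Fin.mk_one, Fin.isValue, Matrix.of_apply, Matrix.add_apply, Matrix.smul_apply,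
        Matrix.sub_apply, Matrix.mul_apply, Fin.sum_univ_two, Matrix.map_apply, Umat,
        Matrix.cons_val', Matrix.cons_val_zero, Matrix.cons_val_one, Matrix.head_cons,
        Matrix.empty_val', Matrix.cons_val_fin_one, Matrix.head_fin_const,
        Matrix.zero_apply, smul_eq_mul]
    · rw [dmap_2aL]
      linear_combination E11 del
    · linear_combination E12 del
    · linear_combination E21 del
    · rw [dmap_negaL]
      linear_combination -E11 del
  · -- trace
    rw [Matrix.trace_fin_two_of]
    ring
  · -- det
    rw [Matrix.det_fin_two_of]
    linear_combination -detL del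
  · -- uniqueness
    intro R' hR'
    obtain ⟨h1, h2, h3, h4, h5, h6⟩ := hR'
    -- vanishing of nonpositive coefficients of the normalized entries
    have hx0 : ∀ n : ℤ, n ≤ 0 → (R' 0 0 - 2).coeff n = 0 := by
      intro n hn
      have := h3 0 0 n hn
      simpa only [Matrix.sub_apply, Matrix.of_apply, Matrix.cons_val', Matrix.cons_val_zero,
        Matrix.empty_val', Matrix.cons_val_fin_one] using this
    have hb0 : ∀ n : ℤ, n ≤ 0 → (R' 0 1).coeff n = 0 := by
      intro n hn
      have := h3 0 1 n hn
      simpa only [Matrix.sub_apply, Matrix.of_apply, Matrix.cons_val', Matrix.cons_val_zero,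
        Matrix.cons_val_one, Matrix.head_cons, Matrix.empty_val', Matrix.cons_val_fin_one,
        sub_zero] using this
    have hc0 : ∀ n : ℤ, n ≤ 0 → (R' 1 0).coeff n = 0 := by
      intro n hn
      have := h3 1 0 n hn
      simpa only [Matrix.sub_apply, Matrix.of_apply, Matrix.cons_val', Matrix.cons_val_zero,
        Matrix.cons_val_one, Matrix.head_cons, Matrix.head_fin_const, Matrix.empty_val',
        Matrix.cons_val_fin_one, sub_zero] using this
    rw [Matrix.trace_fin_two] at h5
    -- power series representations
    set px : P := PowerSeries.mk fun k => (R' 0 0 - 2).coeff (k : ℤ) with hpx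
    set pb₁ : P := PowerSeries.mk fun k => (R' 0 1).coeff (k : ℤ) with hpb₁
    set pc₁ : P := PowerSeries.mk fun k => (R' 1 0).coeff (k : ℤ) with hpc₁
    have hxrep : R' 0 0 - 2 = ofP px := eq_ofP (fun n hn => hx0 n (le_of_lt hn))
    have hbrep : R' 0 1 = ofP pb₁ := eq_ofP (fun n hn => hb0 n (le_of_lt hn))
    have hcrep : R' 1 0 = ofP pc₁ := eq_ofP (fun n hn => hc0 n (le_of_lt hn))
    have h00 : R' 0 0 = 2 + ofP px := by linear_combination hxrep
    have h11 : R' 1 1 = -(ofP px) := by linear_combination h5 - hxrep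
    have hpb₁0 : PowerSeries.coeff 0 pb₁ = 0 := by
      rw [hpb₁, PowerSeries.coeff_mk]
      simpa using hb0 0 le_rfl
    have hpc₁0 : PowerSeries.coeff 0 pc₁ = 0 := by
      rw [hpc₁, PowerSeries.coeff_mk]
      simpa using hc0 0 le_rfl
    have hpx0 : PowerSeries.coeff 0 px = 0 := by
      rw [hpx, PowerSeries.coeff_mk]
      simpa using hx0 0 le_rfl
    set pbs₁ : P := PowerSeries.mk fun k => PowerSeries.coeff (k+1) pb₁ with hpbs₁
    set pcs₁ : P := PowerSeries.mk fun k => PowerSeries.coeff (k+1) pc₁ with hpcs₁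
    have hXb₁ : pb₁ = PowerSeries.X * pbs₁ := X_shift pb₁ hpb₁0
    have hXc₁ : pc₁ = PowerSeries.X * pcs₁ := X_shift pc₁ hpc₁0
    have hxib : xiL * ofP pb₁ = ofP pbs₁ := by
      conv_lhs => rw [hXb₁]
      rw [xiL_mul_ofP]
    have hxic : xiL * ofP pc₁ = ofP pcs₁ := by
      conv_lhs => rw [hXc₁]
      rw [xiL_mul_ofP]
    -- extract the Lax equation entries
    have e01 := congrFun (congrFun h4 0) 1
    have e10 := congrFun (congrFun h4 1) 0
    simp only [Fin.mk_zero, Fin.mk_one, Fin.isValue, Matrix.of_apply, Matrix.add_apply,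
      Matrix.smul_apply, Matrix.sub_apply, Matrix.mul_apply, Fin.sum_univ_two,
      Matrix.map_apply, Umat, Matrix.cons_val', Matrix.cons_val_zero, Matrix.cons_val_one,
      Matrix.head_cons, Matrix.empty_val', Matrix.cons_val_fin_one, Matrix.head_fin_const,
      Matrix.zero_apply, smul_eq_mul] at e01 e10
    rw [h00, h11, hbrep] at e01
    rw [h00, h11, hcrep] at e10
    have Eb : CL eps * dmap del (ofP pb₁)
        = 2 * ofP pbs₁ - 2 * CL (qv 0) * ofP px - 2 * CL (qv 0) := by
      linear_combination e01 + 2 * hxib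
    have Ec : CL eps * dmap del (ofP pc₁)
        = -(2 * ofP pcs₁) - 2 * CL (rv 0) * ofP px - 2 * CL (rv 0) := by
      linear_combination e10 - 2 * hxic
    have ofP_inj : Function.Injective ofP := HahnSeries.ofPowerSeries_injective
    have EbPS : PowerSeries.C eps * psD del pb₁
        = 2 * pbs₁ - 2 * PowerSeries.C (qv 0) * px - 2 * PowerSeries.C (qv 0) := by
      apply ofP_inj
      simp only [map_sub, map_mul, map_ofNat, ofP_C]
      rw [← dmap_ofP]
      exact Eb
    have EcPS : PowerSeries.C eps * psD del pc₁
        = -(2 * pcs₁) - 2 * PowerSeries.C (rv 0) * px - 2 * PowerSeries.C (rv 0) := by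
      apply ofP_inj
      simp only [map_sub, map_neg, map_mul, map_ofNat, ofP_C]
      rw [← dmap_ofP]
      exact Ec
    -- determinant
    rw [Matrix.det_fin_two, h00, h11, hbrep, hcrep] at h6
    have EdPS : px * px + 2 * px + pb₁ * pc₁ = 0 := by
      apply ofP_inj
      simp only [map_add, map_mul, map_ofNat, map_zero]
      linear_combination -h6
    -- coefficientwise comparison
    have cb₁ := (bEq_iff del px pb₁ pbs₁).mp EbPS
    have cb₂ := (bEq_iff del (pa del) (pb del) (pbs del)).mp (hbPS del)
    have cc₁ := (cEq_iff del px pc₁ pcs₁).mp EcPS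
    have cc₂ := (cEq_iff del (pa del) (pc del) (pcs del)).mp (hcPS del)
    have cd₁ := (detEq_iff px pb₁ pc₁).mp EdPS
    have cd₂ := (detEq_iff (pa del) (pb del) (pc del)).mp (hdetPS del)
    have main : ∀ n : ℕ,
        PowerSeries.coeff n px = PowerSeries.coeff n (pa del) ∧
        PowerSeries.coeff n pb₁ = PowerSeries.coeff n (pb del) ∧
        PowerSeries.coeff n pc₁ = PowerSeries.coeff n (pc del) := by
      intro n
      induction n using Nat.strong_induction_on with
      | _ n ih =>
        match n with
        | 0 =>
          refine ⟨?_, ?_, ?_⟩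
          · rw [hpx0, pa_coeff_zero]
          · rw [hpb₁0, pb_coeff_zero]
          · rw [hpc₁0, pc_coeff_zero]
        | (m+1) =>
          have ihm := ih m (by omega)
          -- b and c coefficients via the recursion
          have hb' : PowerSeries.coeff (m+1) pb₁ = PowerSeries.coeff (m+1) (pb del) := by
            have e1 := cb₁ m
            have e2 := cb₂ m
            rw [ihm.1, ihm.2.1] at e1
            have e3 : 2 * PowerSeries.coeff m pbs₁ = 2 * PowerSeries.coeff m (pbs del) := by
              linear_combination e2 - e1
            have e4 := mul_left_cancel₀ two_ne e3
            rw [hpbs₁, PowerSeries.coeff_mk] at e4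
            rw [e4, pbs, PowerSeries.coeff_mk, pb, PowerSeries.coeff_mk]
          have hc' : PowerSeries.coeff (m+1) pc₁ = PowerSeries.coeff (m+1) (pc del) := by
            have e1 := cc₁ m
            have e2 := cc₂ m
            rw [ihm.1, ihm.2.2] at e1
            have e3 : 2 * PowerSeries.coeff m pcs₁ = 2 * PowerSeries.coeff m (pcs del) := by
              linear_combination e1 - e2
            have e4 := mul_left_cancel₀ two_ne e3
            rw [hpcs₁, PowerSeries.coeff_mk] at e4
            rw [e4, pcs, PowerSeries.coeff_mk, pc, PowerSeries.coeff_mk]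
          have ha' : PowerSeries.coeff (m+1) px = PowerSeries.coeff (m+1) (pa del) := by
            have e1 := cd₁ (m+1)
            have e2 := cd₂ (m+1)
            have s1 : ∑ p ∈ Finset.HasAntidiagonal.antidiagonal (m+1),
                PowerSeries.coeff p.1 px * PowerSeries.coeff p.2 px
                = ∑ p ∈ Finset.HasAntidiagonal.antidiagonal (m+1),
                PowerSeries.coeff p.1 (pa del) * PowerSeries.coeff p.2 (pa del) := by
              refine Finset.sum_congr rfl fun p hp => ?_
              rw [Finset.HasAntidiagonal.mem_antidiagonal] at hp
              rcases Nat.eq_zero_or_pos p.1 with hp1 | hp1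
              · rw [hp1, hpx0, pa_coeff_zero, zero_mul, zero_mul]
              rcases Nat.eq_zero_or_pos p.2 with hp2 | hp2
              · rw [hp2, hpx0, pa_coeff_zero, mul_zero, mul_zero]
              rw [(ih p.1 (by omega)).1, (ih p.2 (by omega)).1]
            have s2 : ∑ p ∈ Finset.HasAntidiagonal.antidiagonal (m+1),
                PowerSeries.coeff p.1 pb₁ * PowerSeries.coeff p.2 pc₁
                = ∑ p ∈ Finset.HasAntidiagonal.antidiagonal (m+1),
                PowerSeries.coeff p.1 (pb del) * PowerSeries.coeff p.2 (pc del) := by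
              refine Finset.sum_congr rfl fun p hp => ?_
              rw [Finset.HasAntidiagonal.mem_antidiagonal] at hp
              rcases Nat.eq_zero_or_pos p.1 with hp1 | hp1
              · rw [hp1, hpb₁0, pb_coeff_zero, zero_mul, zero_mul]
              rcases Nat.eq_zero_or_pos p.2 with hp2 | hp2
              · rw [hp2, hpc₁0, pc_coeff_zero, mul_zero, mul_zero]
              rw [(ih p.1 (by omega)).2.1, (ih p.2 (by omega)).2.2]
            have e3 : 2 * PowerSeries.coeff (m+1) px
                = 2 * PowerSeries.coeff (m+1) (pa del) := by
              linear_combination e1 - e2 - s1 - s2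
            exact mul_left_cancel₀ two_ne e3
          exact ⟨ha', hb', hc'⟩
    have hpx_eq : px = pa del := PowerSeries.ext fun n => (main n).1
    have hpb_eq : pb₁ = pb del := PowerSeries.ext fun n => (main n).2.1
    have hpc_eq : pc₁ = pc del := PowerSeries.ext fun n => (main n).2.2
    rw [Matrix.eta_fin_two R', h00, h11, hbrep, hcrep, hpx_eq, hpb_eq, hpc_eq]
    rw [aL, bL, cL]

end
end

section
/- For each j ≥ 0, setting V_j(ξ) = (ξ^{j+1}·R(ξ))₊ (the polynomial part in ξ), the NLS derivation D_j satisfies D_j(U(ξ)) = 2^j ε⁻¹·([V_j(ξ), U(ξ)] − ε∂(V_j(ξ))) (D_j acts entrywise, with D_j(ξ) = 0); equivalently, D_j(ℒ(ξ)) = 2^j ε⁻¹ [V_j(ξ), ℒ(ξ)] for the operator ℒ(ξ) = ε∂ + U(ξ). -/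
set_option synthInstance.maxHeartbeats 1000000
set_option maxHeartbeats 1000000

noncomputable section

/-- Polynomial part in ξ of a Laurent series: keep the exponents n ≤ 0 of ξ⁻¹. -/
def polyPart (x : NLSL) : NLSL where
  coeff n := if n ≤ 0 then x.coeff n else 0
  isPWO_support' := x.isPWO_support'.mono (by
    intro n hn
    simp only [Function.mem_support, ne_eq] at hn ⊢
    intro h
    apply hn
    rw [h]
    simp)

/-- V_j(ξ) = (ξ^{j+1} R(ξ))₊, the polynomial part in ξ. -/
def Vmat (a b c : NLSL) (j : ℕ) : Matrix (Fin 2) (Fin 2) NLSL :=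
  Matrix.of fun i l =>
    polyPart (HahnSeries.single (-(j + 1) : ℤ) (1 : NLSE) * Rmat a b c i l)

end

noncomputable section Helpers

lemma polyPart_coeff (x : NLSL) (n : ℤ) :
    (polyPart x).coeff n = if n ≤ 0 then x.coeff n else 0 := rfl

lemma dmap_coeff (d : Derivation ℂ NLSE NLSE) (x : NLSL) (n : ℤ) :
    (dmap d x).coeff n = d (x.coeff n) := rfl

lemma CL_mul_coeff (x : NLSE) (y : NLSL) (n : ℤ) :
    (CL x * y).coeff n = x * y.coeff n := by
  rw [CL, HahnSeries.C_apply, HahnSeries.coeff_single_zero_mul]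

lemma CL_coeff (x : NLSE) (n : ℤ) : (CL x).coeff n = if n = 0 then x else 0 := by
  rw [CL, HahnSeries.C_apply, HahnSeries.coeff_single]; split <;> rfl

lemma xiL_mul_coeff (y : NLSL) (n : ℤ) : (xiL * y).coeff n = y.coeff (n + 1) := by
  have := HahnSeries.coeff_single_mul_add (r := (1 : NLSE)) (x := y) (a := n + 1) (b := (-1 : ℤ))
  simpa [xiL] using this

lemma two_mul_coeff (x : NLSL) (n : ℤ) : ((2 : NLSL) * x).coeff n = 2 * x.coeff n := by
  rw [two_mul, HahnSeries.coeff_add, two_mul]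

lemma shift_mul_coeff (k : ℤ) (x : NLSL) (n : ℤ) :
    (HahnSeries.single (-k) (1 : NLSE) * x).coeff n = x.coeff (n + k) := by
  have := HahnSeries.coeff_single_mul_add (r := (1 : NLSE)) (x := x) (a := n + k) (b := -k)
  simpa using this

lemma der_two (d : Derivation ℂ NLSE NLSE) : d (2 : NLSE) = 0 := by
  rw [show (2 : NLSE) = 1 + 1 by norm_num, map_add, Derivation.map_one_eq_zero, add_zero]

lemma Vmat_coeff (a b c : NLSL) (j : ℕ) (i l : Fin 2) (n : ℤ) :
    (Vmat a b c j i l).coeff n =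
      if n ≤ 0 then (Rmat a b c i l).coeff (n + ((j : ℤ) + 1)) else 0 := by
  rw [Vmat, Matrix.of_apply, polyPart_coeff]
  congr 1
  rw [show (-(j + 1 : ℤ)) = -((j : ℤ) + 1) by norm_cast, shift_mul_coeff]

end Helpers

noncomputable section Helpers2

lemma two_coeff (n : ℤ) : (2 : NLSL).coeff n = if n = 0 then 2 else 0 := by
  rw [show (2 : NLSL) = 1 + 1 by norm_num, HahnSeries.coeff_add, HahnSeries.coeff_one]
  split <;> norm_num

lemma mul_xiL_coeff (x : NLSL) (n : ℤ) : (x * xiL).coeff n = x.coeff (n + 1) := by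
  rw [mul_comm, xiL_mul_coeff]

lemma mul_CL_coeff (x : NLSL) (y : NLSE) (n : ℤ) : (x * CL y).coeff n = y * x.coeff n := by
  rw [mul_comm, CL_mul_coeff]

lemma der_ite2 (d : Derivation ℂ NLSE NLSE) (P : Prop) [Decidable P] :
    d (if P then (2 : NLSE) else 0) = 0 := by
  split
  · exact der_two d
  · exact map_zero d

lemma recA (del : Derivation ℂ NLSE NLSE) (a b c : NLSL)
    (hlax : CL eps • (Rmat a b c).map (dmap del)
      + (Umat * Rmat a b c - Rmat a b c * Umat) = 0) (n : ℤ) :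
    eps * del (a.coeff n) - qv 0 * c.coeff n - rv 0 * b.coeff n = 0 := by
  have h := congrFun (congrFun hlax 0) 0
  simp only [Umat, Rmat, Matrix.add_apply, Matrix.smul_apply, Matrix.sub_apply,
    Matrix.mul_apply, Fin.sum_univ_two, Matrix.map_apply, Matrix.zero_apply,
    Matrix.cons_val_zero, Matrix.cons_val_one, Matrix.head_cons, Matrix.of_apply,
    Matrix.cons_val', Matrix.empty_val', Matrix.cons_val_fin_one, Matrix.head_fin_const,
    smul_eq_mul] at h
  have h3 := congrArg (fun s : NLSL => s.coeff n) h
  simp only [HahnSeries.coeff_add, HahnSeries.coeff_sub, HahnSeries.coeff_neg,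
    HahnSeries.coeff_zero, neg_mul, mul_neg, two_mul_coeff, CL_mul_coeff, mul_CL_coeff,
    xiL_mul_coeff, mul_xiL_coeff, dmap_coeff, CL_coeff, two_coeff, mul_ite, mul_zero,
    ite_mul, zero_mul, map_add, der_ite2, zero_add, add_zero] at h3
  linear_combination h3

end Helpers2
noncomputable section RecBC
lemma recB (del : Derivation ℂ NLSE NLSE) (a b c : NLSL)
    (hlax : CL eps • (Rmat a b c).map (dmap del)
      + (Umat * Rmat a b c - Rmat a b c * Umat) = 0) (n : ℤ) :
    eps * del (b.coeff n) + 2 * (qv 0 * a.coeff n) + qv 0 * (if n = 0 then (2 : NLSE) else 0)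
      - 2 * b.coeff (n + 1) = 0 := by
  have h := congrFun (congrFun hlax 0) 1
  simp only [Umat, Rmat, Matrix.add_apply, Matrix.smul_apply, Matrix.sub_apply,
    Matrix.mul_apply, Fin.sum_univ_two, Matrix.map_apply, Matrix.zero_apply,
    Matrix.cons_val_zero, Matrix.cons_val_one, Matrix.head_cons, Matrix.of_apply,
    Matrix.cons_val', Matrix.empty_val', Matrix.cons_val_fin_one, Matrix.head_fin_const,
    smul_eq_mul] at h
  have h3 := congrArg (fun s : NLSL => s.coeff n) h
  simp only [HahnSeries.coeff_add, HahnSeries.coeff_sub, HahnSeries.coeff_neg,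
    HahnSeries.coeff_zero, neg_mul, mul_neg, two_mul_coeff, CL_mul_coeff, mul_CL_coeff,
    xiL_mul_coeff, mul_xiL_coeff, dmap_coeff, CL_coeff, two_coeff,
    map_add, der_ite2, zero_add, add_zero] at h3
  linear_combination h3

lemma recC (del : Derivation ℂ NLSE NLSE) (a b c : NLSL)
    (hlax : CL eps • (Rmat a b c).map (dmap del)
      + (Umat * Rmat a b c - Rmat a b c * Umat) = 0) (n : ℤ) :
    eps * del (c.coeff n) + 2 * (rv 0 * a.coeff n) + rv 0 * (if n = 0 then (2 : NLSE) else 0)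
      + 2 * c.coeff (n + 1) = 0 := by
  have h := congrFun (congrFun hlax 1) 0
  simp only [Umat, Rmat, Matrix.add_apply, Matrix.smul_apply, Matrix.sub_apply,
    Matrix.mul_apply, Fin.sum_univ_two, Matrix.map_apply, Matrix.zero_apply,
    Matrix.cons_val_zero, Matrix.cons_val_one, Matrix.head_cons, Matrix.of_apply,
    Matrix.cons_val', Matrix.empty_val', Matrix.cons_val_fin_one, Matrix.head_fin_const,
    smul_eq_mul] at h
  have h3 := congrArg (fun s : NLSL => s.coeff n) h
  simp only [HahnSeries.coeff_add, HahnSeries.coeff_sub, HahnSeries.coeff_neg,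
    HahnSeries.coeff_zero, neg_mul, mul_neg, two_mul_coeff, CL_mul_coeff, mul_CL_coeff,
    xiL_mul_coeff, mul_xiL_coeff, dmap_coeff, CL_coeff, two_coeff,
    map_add, der_ite2, zero_add, add_zero] at h3
  linear_combination h3
end RecBC

noncomputable section Helpers3
lemma der_ite (d : Derivation ℂ NLSE NLSE) (P : Prop) [Decidable P] (x : NLSE) :
    d (if P then x else 0) = if P then d x else 0 := by
  split
  · rfl
  · exact map_zero d
end Helpers3

noncomputable section Helpers4
lemma xiL_coeff (n : ℤ) : xiL.coeff n = if n = -1 then 1 else 0 := by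
  rw [xiL, HahnSeries.coeff_single]; split <;> rfl
end Helpers4

noncomputable section

/-- the Lax form of the NLS derivations,
D_j(U(ξ)) = 2^j ε⁻¹ ([V_j(ξ), U(ξ)] − ε∂(V_j(ξ))). -/
theorem nls_derivations_lax_form
    (del : Derivation ℂ NLSE NLSE) (hdel : IsDel del)
    (a b c : NLSL) (hR : IsMR del a b c)
    (D : ℕ → Derivation ℂ NLSE NLSE) (hD : IsNLSD del b c D) :
    ∀ j : ℕ,
      Umat.map (dmap (D j)) =
        CL ((2 : NLSE) ^ j * epsInv) •
          ((Vmat a b c j * Umat - Umat * Vmat a b c j)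
            - CL eps • (Vmat a b c j).map (dmap del)) := by
  obtain ⟨-, -, -, -, -, -, hlax, -⟩ := hR
  obtain ⟨-, -, hq, hr⟩ := hD
  intro j
  refine Matrix.ext (Fin.forall_fin_two.2 ⟨Fin.forall_fin_two.2 ⟨?_, ?_⟩,
    Fin.forall_fin_two.2 ⟨?_, ?_⟩⟩)
  · -- entry (0,0)
    ext n : 2
    simp only [Umat, Rmat, Matrix.map_apply, Matrix.smul_apply, Matrix.sub_apply,
      Matrix.add_apply, Matrix.mul_apply, Fin.sum_univ_two, Matrix.cons_val_zero,
      Matrix.cons_val_one, Matrix.head_cons, Matrix.of_apply, Matrix.cons_val',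
      Matrix.empty_val', Matrix.cons_val_fin_one, Matrix.head_fin_const, smul_eq_mul]
    simp only [HahnSeries.coeff_add, HahnSeries.coeff_sub, HahnSeries.coeff_neg,
      HahnSeries.coeff_zero, neg_mul, mul_neg, two_mul_coeff, CL_mul_coeff, mul_CL_coeff,
      xiL_mul_coeff, mul_xiL_coeff, dmap_coeff, CL_coeff, two_coeff, Vmat_coeff, Rmat,
      map_add, map_neg, der_ite2, der_ite, zero_add, add_zero, map_zero, xiL_coeff,
      Derivation.map_one_eq_zero, der_two, neg_zero, ite_self,
      Matrix.cons_val_zero, Matrix.cons_val_one, Matrix.head_cons, Matrix.of_apply,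
      Matrix.cons_val', Matrix.empty_val', Matrix.cons_val_fin_one, Matrix.head_fin_const]
    by_cases hn : n ≤ 0
    · simp only [if_pos hn]
      linear_combination ((2:NLSE) ^ j * epsInv) * recA del a b c hlax (n + ((j:ℤ) + 1))
    · simp only [if_neg hn, if_neg (show ¬(n + 1 ≤ 0) by omega)]
      ring
  · -- entry (0,1)
    ext n : 2
    simp only [Umat, Rmat, Matrix.map_apply, Matrix.smul_apply, Matrix.sub_apply,
      Matrix.add_apply, Matrix.mul_apply, Fin.sum_univ_two, Matrix.cons_val_zero,
      Matrix.cons_val_one, Matrix.head_cons, Matrix.of_apply, Matrix.cons_val',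
      Matrix.empty_val', Matrix.cons_val_fin_one, Matrix.head_fin_const, smul_eq_mul]
    simp only [HahnSeries.coeff_add, HahnSeries.coeff_sub, HahnSeries.coeff_neg,
      HahnSeries.coeff_zero, neg_mul, mul_neg, two_mul_coeff, CL_mul_coeff, mul_CL_coeff,
      xiL_mul_coeff, mul_xiL_coeff, dmap_coeff, CL_coeff, two_coeff, Vmat_coeff, Rmat,
      map_add, map_neg, der_ite2, der_ite, zero_add, add_zero, map_zero, xiL_coeff,
      Derivation.map_one_eq_zero, der_two, neg_zero, ite_self,
      Matrix.cons_val_zero, Matrix.cons_val_one, Matrix.head_cons, Matrix.of_apply,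
      Matrix.cons_val', Matrix.empty_val', Matrix.cons_val_fin_one, Matrix.head_fin_const]
    rcases lt_trichotomy n 0 with hn | hn | hn
    · rw [show n + 1 + ((j:ℤ) + 1) = n + ((j:ℤ) + 1) + 1 from by ring]
      simp only [if_pos (show n ≤ 0 by omega), if_pos (show n + 1 ≤ 0 by omega),
        if_neg (show ¬(n = 0) by omega)]
      linear_combination ((2:NLSE) ^ j * epsInv) * recB del a b c hlax (n + ((j:ℤ) + 1))
    · subst hn
      have hjj : ¬((0:ℤ) + ((j:ℤ) + 1) = 0) := by omega
      simp only [if_pos (le_refl (0:ℤ)), if_neg (show ¬((0:ℤ) + 1 ≤ 0) by omega),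
        if_neg hjj, if_pos rfl, if_true]
      have hrec := recB del a b c hlax (0 + ((j:ℤ) + 1))
      rw [if_neg hjj] at hrec
      have hq' := hq j
      rw [coA] at hq'
      push_cast at hq'
      rw [show ((j:ℤ) + 1 + 1 : ℤ) = 0 + ((j:ℤ) + 1) + 1 from by ring] at hq'
      linear_combination (-1 : NLSE) * hq' + ((2:NLSE) ^ j * epsInv) * hrec
    · simp only [if_neg (show ¬(n ≤ 0) by omega), if_neg (show ¬(n + 1 ≤ 0) by omega),
        if_neg (show ¬(n = 0) by omega)]
      ring
  · -- entry (1,0)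
    ext n : 2
    simp only [Umat, Rmat, Matrix.map_apply, Matrix.smul_apply, Matrix.sub_apply,
      Matrix.add_apply, Matrix.mul_apply, Fin.sum_univ_two, Matrix.cons_val_zero,
      Matrix.cons_val_one, Matrix.head_cons, Matrix.of_apply, Matrix.cons_val',
      Matrix.empty_val', Matrix.cons_val_fin_one, Matrix.head_fin_const, smul_eq_mul]
    simp only [HahnSeries.coeff_add, HahnSeries.coeff_sub, HahnSeries.coeff_neg,
      HahnSeries.coeff_zero, neg_mul, mul_neg, two_mul_coeff, CL_mul_coeff, mul_CL_coeff,
      xiL_mul_coeff, mul_xiL_coeff, dmap_coeff, CL_coeff, two_coeff, Vmat_coeff, Rmat,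
      map_add, map_neg, der_ite2, der_ite, zero_add, add_zero, map_zero, xiL_coeff,
      Derivation.map_one_eq_zero, der_two, neg_zero, ite_self,
      Matrix.cons_val_zero, Matrix.cons_val_one, Matrix.head_cons, Matrix.of_apply,
      Matrix.cons_val', Matrix.empty_val', Matrix.cons_val_fin_one, Matrix.head_fin_const]
    rcases lt_trichotomy n 0 with hn | hn | hn
    · rw [show n + 1 + ((j:ℤ) + 1) = n + ((j:ℤ) + 1) + 1 from by ring]
      simp only [if_pos (show n ≤ 0 by omega), if_pos (show n + 1 ≤ 0 by omega),
        if_neg (show ¬(n = 0) by omega)]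
      linear_combination ((2:NLSE) ^ j * epsInv) * recC del a b c hlax (n + ((j:ℤ) + 1))
    · subst hn
      have hjj : ¬((0:ℤ) + ((j:ℤ) + 1) = 0) := by omega
      simp only [if_pos (le_refl (0:ℤ)), if_neg (show ¬((0:ℤ) + 1 ≤ 0) by omega),
        if_neg hjj, if_pos rfl, if_true]
      have hrec := recC del a b c hlax (0 + ((j:ℤ) + 1))
      rw [if_neg hjj] at hrec
      have hr' := hr j
      rw [coA] at hr'
      push_cast at hr'
      rw [show ((j:ℤ) + 1 + 1 : ℤ) = 0 + ((j:ℤ) + 1) + 1 from by ring] at hr'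
      linear_combination hr' + ((2:NLSE) ^ j * epsInv) * hrec
    · simp only [if_neg (show ¬(n ≤ 0) by omega), if_neg (show ¬(n + 1 ≤ 0) by omega),
        if_neg (show ¬(n = 0) by omega)]
      ring
  · -- entry (1,1)
    ext n : 2
    simp only [Umat, Rmat, Matrix.map_apply, Matrix.smul_apply, Matrix.sub_apply,
      Matrix.add_apply, Matrix.mul_apply, Fin.sum_univ_two, Matrix.cons_val_zero,
      Matrix.cons_val_one, Matrix.head_cons, Matrix.of_apply, Matrix.cons_val',
      Matrix.empty_val', Matrix.cons_val_fin_one, Matrix.head_fin_const, smul_eq_mul]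
    simp only [HahnSeries.coeff_add, HahnSeries.coeff_sub, HahnSeries.coeff_neg,
      HahnSeries.coeff_zero, neg_mul, mul_neg, two_mul_coeff, CL_mul_coeff, mul_CL_coeff,
      xiL_mul_coeff, mul_xiL_coeff, dmap_coeff, CL_coeff, two_coeff, Vmat_coeff, Rmat,
      map_add, map_neg, der_ite2, der_ite, zero_add, add_zero, map_zero, xiL_coeff,
      Derivation.map_one_eq_zero, der_two, neg_zero, ite_self,
      Matrix.cons_val_zero, Matrix.cons_val_one, Matrix.head_cons, Matrix.of_apply,
      Matrix.cons_val', Matrix.empty_val', Matrix.cons_val_fin_one, Matrix.head_fin_const]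
    by_cases hn : n ≤ 0
    · simp only [if_pos hn]
      linear_combination (-((2:NLSE) ^ j * epsInv)) * recA del a b c hlax (n + ((j:ℤ) + 1))
    · simp only [if_neg hn, if_neg (show ¬(n + 1 ≤ 0) by omega)]
      ring


end
end

section
/- With λ = 2ξ, the gauge identity ε·T⁻¹·∂(T) + T⁻¹·U^{NLS}(ξ)·T = (λ/2)·I₂ − [[λ, −w],[1, Λ⁻¹(v)]] holds; equivalently, conjugation by T carries the operator ε∂ + U^{NLS}(ξ) to 𝒜(λ) + (λ/2)·I₂, where 𝒜(λ) := ε∂ − [[λ, −w],[1, Λ⁻¹(v)]]. -/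
set_option synthInstance.maxHeartbeats 1000000
set_option maxHeartbeats 1000000

noncomputable section

open Polynomial

/-- the gauge identity
ε·T⁻¹·∂(T) + T⁻¹·U^{NLS}(ξ)·T = (λ/2)·I₂ − [[λ, −w],[1, Λ⁻¹(v)]], with λ = 2ξ,
as an identity of 2×2 matrices over B[ξ]. -/
theorem toda_nls_gauge_identity
    {B : Type*} [CommRing B] [Algebra ℂ B]
    -- B is a commutative algebra over ℂ[ε,ε⁻¹]:
    (eb ebi : B) (hebi : eb * ebi = 1)
    (del : Derivation ℂ B B) (hdeps : del eb = 0)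
    (lam : B ≃+* B) (hlamdel : ∀ x, lam (del x) = del (lam x)) (hlameps : lam eb = eb)
    (q r v w : B) (q' r' : B) (hq' : q * q' = 1) (hr' : r * r' = 1)
    (hqr : q * r = w) (hqr1 : lam.symm q * r = 1)
    (hdq : eb * del q = q * v) (hdr : eb * del r = -(r * lam.symm v)) :
    (C eb : B[X]) • ((!![(-1 : B[X]), 0; 0, C r']) * !![(0 : B[X]), 0; 0, C (del r)])
        + (!![(-1 : B[X]), 0; 0, C r']) * !![-X, -(C q); C r, X] *
            (!![(-1 : B[X]), 0; 0, C r]) =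
      (X : B[X]) • (1 : Matrix (Fin 2) (Fin 2) B[X])
        - !![2 * X, -(C w); 1, C (lam.symm v)] := by
  have h2 : r' * r = 1 := by rw [mul_comm]; exact hr'
  have h1 : eb * (r' * del r) = -(lam.symm v) := by
    calc eb * (r' * del r) = r' * (eb * del r) := by ring
    _ = r' * (-(r * lam.symm v)) := by rw [hdr]
    _ = -(r' * r * lam.symm v) := by ring
    _ = -(lam.symm v) := by rw [h2, one_mul]
  refine Matrix.ext fun i j => ?_
  fin_cases i <;> fin_cases j <;>
    simp [Matrix.mul_apply, Fin.sum_univ_succ, Matrix.one_apply, Matrix.smul_apply]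
  · ring
  · rw [← C_mul, hqr]
  · rw [← C_mul, h2, map_one]
  · rw [← C_mul, ← C_mul, h1, map_neg]
    have h3 : C r' * X * C r = X * C (r' * r) := by rw [C_mul]; ring
    rw [h3, h2, map_one]; ring

end
end
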